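/- For every p ≥ 1 and every probability measure μ on Y with finite p-th moment, W'_p(μ,0)^p = inf { W_p(μ,ξ)^p : ξ probability measure supported on ∂Y }, i.e. the cost of annihilating μ at the boundary equals the infimal Wasserstein distance to measures on the boundary. Moreover 2^{-1+1/p} W'_p(μ,0) ≤ W*_p(μ) ≤ W'_p(μ,0), where W*_p(μ) := (1/2) W*_p(μ,μ). -/

import Mathlib

open MeasureTheory Metric Set
open scoped ENNReal NNReal

/-- `d*(x,y) := inf_{z ∈ X \ Y} (d(x,z) + d(z,y))`. -/
noncomputable def dstar {X : Type*} [MetricSpace X] (Y : Set X) (x y : X) : ℝ :=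
  ⨅ z : (Yᶜ : Set X), (dist x (z : X) + dist (z : X) y)

/-- Couplings of two measures. -/
def Cpl {α : Type*} [MeasurableSpace α] (μ ν : Measure α) : Set (Measure (α × α)) :=
  {q | q.map Prod.fst = μ ∧ q.map Prod.snd = ν}

/-- `p`-transportation cost of a plan `q` with respect to a cost function `c`. -/
noncomputable def tcost {α : Type*} [MeasurableSpace α] (c : α → α → ℝ) (p : ℝ)
    (q : Measure (α × α)) : ℝ≥0∞ :=
  ∫⁻ z, ENNReal.ofReal (c z.1 z.2 ^ p) ∂q

/-- The `L^p`-transportation distance `W̃_p` between charged (sub)probability measures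
`σ = (σ⁺,σ⁻)` and `τ = (τ⁺,τ⁻)`: infimum over decomposed couplings `q^{++},q^{+-},q^{-+},q^{--}`
with the appropriate marginals, transporting like charges at cost `d` and opposite charges at
cost `d*`. -/
noncomputable def Wtilde {X : Type*} [MetricSpace X] [MeasurableSpace X] (Y : Set X) (p : ℝ)
    (σ τ : Measure X × Measure X) : ℝ≥0∞ :=
  (⨅ Q : {Q : Measure (X × X) × Measure (X × X) × Measure (X × X) × Measure (X × X) //
        (Q.1 + Q.2.1).map Prod.fst = σ.1 ∧ (Q.2.2.1 + Q.2.2.2).map Prod.fst = σ.2 ∧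
        (Q.1 + Q.2.2.1).map Prod.snd = τ.1 ∧ (Q.2.1 + Q.2.2.2).map Prod.snd = τ.2},
      tcost (fun x y => dist x y) p Q.1.1 + tcost (dstar Y) p Q.1.2.1 +
        tcost (dstar Y) p Q.1.2.2.1 + tcost (fun x y => dist x y) p Q.1.2.2.2) ^ (1/p)

/-- The transportation-annihilation pre-distance `W⁰_p` between subprobabilities on `Y`. -/
noncomputable def W0 {X : Type*} [MetricSpace X] [MeasurableSpace X] (Y : Set X) (p : ℝ)
    (μ ν : Measure X) : ℝ≥0∞ :=
  ⨅ re : {re : Measure X × Measure X //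
      (μ + (2 : ℝ≥0∞) • re.1) Set.univ = 1 ∧ (ν + (2 : ℝ≥0∞) • re.2) Set.univ = 1},
    Wtilde Y p (μ + re.1.1, re.1.1) (ν + re.1.2, re.1.2)

/-- `W'_p(μ,0)^p = ∫ d'(x,∂)^p dμ`: the `p`-th power of the cost of annihilating `μ`
at the boundary via the shortcut metric. -/
noncomputable def WprimeZeroPow {X : Type*} [MetricSpace X] [MeasurableSpace X]
    (Y : Set X) (p : ℝ) (μ : Measure X) : ℝ≥0∞ :=
  ∫⁻ x, ENNReal.ofReal (infDist x Yᶜ ^ p) ∂μ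

/-- `W_p(μ,ν)^p`: the `p`-th power of the Kantorovich-Wasserstein distance. -/
noncomputable def WpPow {X : Type*} [MetricSpace X] [MeasurableSpace X] (p : ℝ)
    (μ ν : Measure X) : ℝ≥0∞ :=
  ⨅ q : Cpl μ ν, tcost (fun a b => dist a b) p q.1

/-- `W*_p(μ,ν)^p`: the `p`-th power of the transportation cost w.r.t. the meta-metric `d*`. -/
noncomputable def WstarPow {X : Type*} [MetricSpace X] [MeasurableSpace X] (Y : Set X) (p : ℝ)
    (μ ν : Measure X) : ℝ≥0∞ :=
  ⨅ q : Cpl μ ν, tcost (dstar Y) p q.1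

/-- The annihilation cost `W*_p(μ) := (1/2) W*_p(μ,μ)`. -/
noncomputable def Wstar {X : Type*} [MetricSpace X] [MeasurableSpace X] (Y : Set X) (p : ℝ)
    (μ : Measure X) : ℝ≥0∞ :=
  2⁻¹ * (WstarPow Y p μ μ) ^ (1/p)

/-- Approximate midpoint property: a characterization of length spaces. -/
def IsLengthDist {α : Type*} (d : α → α → ℝ) : Prop :=
  ∀ x y : α, ∀ ε > (0:ℝ), ∃ z : α, d x z ≤ d x y / 2 + ε ∧ d z y ≤ d x y / 2 + ε

section auxx
variable {X : Type*} [MetricSpace X] {Y : Set X}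

theorem dstar_bddBelow (x y : X) :
    BddBelow (Set.range fun z : (Yᶜ : Set X) => dist x (z : X) + dist (z : X) y) := by
  refine ⟨0, ?_⟩
  rintro _ ⟨z, rfl⟩
  positivity

theorem dstar_nonneg (x y : X) : 0 ≤ dstar Y x y :=
  Real.iInf_nonneg fun z => by positivity

theorem dstar_le (x y : X) (z : (Yᶜ : Set X)) : dstar Y x y ≤ dist x (z : X) + dist (z : X) y :=
  ciInf_le (dstar_bddBelow x y) z

theorem dstar_sub_le (x y x' y' : X) (hYc : Yᶜ.Nonempty) :
    dstar Y x y ≤ dstar Y x' y' + (dist x x' + dist y y') := by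
  haveI : Nonempty (Yᶜ : Set X) := hYc.to_subtype
  rw [← sub_le_iff_le_add]
  apply le_ciInf
  intro z
  have h1 := dstar_le (Y := Y) x y z
  have h2 : dist x (z : X) ≤ dist x x' + dist x' (z : X) := dist_triangle _ _ _
  have h3 : dist (z : X) y ≤ dist (z : X) y' + dist y' y := dist_triangle _ _ _
  have h4 : dist y' y = dist y y' := dist_comm _ _
  linarith

theorem continuous_dstar (hYc : Yᶜ.Nonempty) :
    Continuous (fun z : X × X => dstar Y z.1 z.2) := by
  have : LipschitzWith 2 (fun z : X × X => dstar Y z.1 z.2) := by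
    apply LipschitzWith.of_dist_le_mul
    intro z z'
    rw [Real.dist_eq, abs_sub_le_iff]
    have e1 := dstar_sub_le z.1 z.2 z'.1 z'.2 hYc
    have e2 := dstar_sub_le z'.1 z'.2 z.1 z.2 hYc
    have d1 : dist z.1 z'.1 ≤ dist z z' := le_max_left _ _
    have d2 : dist z.2 z'.2 ≤ dist z z' := le_max_right _ _
    have d1' : dist z'.1 z.1 = dist z.1 z'.1 := dist_comm _ _
    have d2' : dist z'.2 z.2 = dist z.2 z'.2 := dist_comm _ _
    constructor <;> push_cast <;> linarith
  exact this.continuous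

theorem dstar_self_le (hYc : Yᶜ.Nonempty) (x : X) : dstar Y x x ≤ 2 * infDist x Yᶜ := by
  apply le_of_forall_pos_le_add
  intro ε hε
  obtain ⟨z, hz, hdz⟩ := (infDist_lt_iff hYc).mp (by linarith : infDist x Yᶜ < infDist x Yᶜ + ε/2)
  have h := dstar_le (Y := Y) x x ⟨z, hz⟩
  have hdc : dist z x = dist x z := dist_comm _ _
  simp only at h
  linarith

theorem add_infDist_le_dstar (hYc : Yᶜ.Nonempty) (x y : X) :
    infDist x Yᶜ + infDist y Yᶜ ≤ dstar Y x y := by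
  haveI : Nonempty (Yᶜ : Set X) := hYc.to_subtype
  apply le_ciInf
  intro z
  have h1 : infDist x Yᶜ ≤ dist x (z : X) := infDist_le_dist_of_mem z.2
  have h2 : infDist y Yᶜ ≤ dist y (z : X) := infDist_le_dist_of_mem z.2
  have h3 : dist y (z : X) = dist (z : X) y := dist_comm _ _
  linarith

theorem exists_frontier_close [CompleteSpace X]
    (hlength : IsLengthDist (fun x y : X => dist x y)) (hYopen : IsOpen Y)
    {a b : X} (ha : a ∈ Y) (hb : b ∈ Yᶜ) {ε : ℝ} (hε : 0 < ε) :
    ∃ w ∈ frontier Y, dist a w ≤ dist a b + ε := by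
  classical
  set c : ℝ := ε / 8 with hc
  have hcpos : 0 < c := by positivity
  have key : ∀ (s : {pr : X × X // pr.1 ∈ Y ∧ pr.2 ∈ Yᶜ}) (n : ℕ),
      ∃ t : {pr : X × X // pr.1 ∈ Y ∧ pr.2 ∈ Yᶜ},
        dist t.1.1 t.1.2 ≤ dist s.1.1 s.1.2 / 2 + c * (1/2)^n ∧
        dist s.1.1 t.1.1 ≤ dist s.1.1 s.1.2 / 2 + c * (1/2)^n := by
    rintro ⟨⟨x, y⟩, hx, hy⟩ n
    have hδ : 0 < c * (1/2)^n := by positivity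
    obtain ⟨m, hm1, hm2⟩ := hlength x y (c * (1/2)^n) hδ
    by_cases hmY : m ∈ Y
    · exact ⟨⟨(m, y), hmY, hy⟩, by simpa using hm2, by simpa using hm1⟩
    · refine ⟨⟨(x, m), hx, hmY⟩, by simpa using hm1, ?_⟩
      simp only [dist_self]
      positivity
  choose next hnext1 hnext2 using key
  set seq : ℕ → {pr : X × X // pr.1 ∈ Y ∧ pr.2 ∈ Yᶜ} :=
    fun n => Nat.rec ⟨(a, b), ha, hb⟩ (fun n s => next s n) n with hseq
  set A : ℕ → X := fun n => (seq n).1.1 with hA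
  set B : ℕ → X := fun n => (seq n).1.2 with hB
  set D : ℕ → ℝ := fun n => dist (A n) (B n) with hD
  have hD0 : ∀ n, 0 ≤ D n := fun n => dist_nonneg
  have hDstep : ∀ n, D (n+1) ≤ D n / 2 + c * (1/2)^n := fun n => hnext1 (seq n) n
  have hAstep : ∀ n, dist (A n) (A (n+1)) ≤ D n / 2 + c * (1/2)^n := fun n => hnext2 (seq n) n
  set K : ℝ := D 0 + 4 * c with hK
  have hKpos : 0 < K := by have := hD0 0; simp only [hK]; linarith
  have hgeom : ∀ n, D n ≤ K * (3/4)^n := by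
    intro n
    induction n with
    | zero => simp only [pow_zero, mul_one, hK]; linarith [hD0 0]
    | succ n ih =>
      have h1 : (1/2:ℝ)^n ≤ (3/4)^n := pow_le_pow_left₀ (by norm_num) (by norm_num) n
      have h2 : c * (1/2)^n ≤ (K / 4) * (3/4)^n := by
        have hc4 : c ≤ K / 4 := by simp only [hK]; linarith [hD0 0]
        nlinarith [pow_nonneg (by norm_num : (0:ℝ) ≤ 1/2) n,
          pow_nonneg (by norm_num : (0:ℝ) ≤ 3/4) n]
      calc D (n+1) ≤ D n / 2 + c * (1/2)^n := hDstep n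
        _ ≤ K * (3/4)^n / 2 + (K/4) * (3/4)^n := by linarith
        _ = K * (3/4)^(n+1) := by ring
  have hAgeom : ∀ n, dist (A n) (A (n+1)) ≤ K * (3/4)^n := by
    intro n
    have h1 : (1/2:ℝ)^n ≤ (3/4)^n := pow_le_pow_left₀ (by norm_num) (by norm_num) n
    have h2 : c * (1/2)^n ≤ (K / 4) * (3/4)^n := by
      have hc4 : c ≤ K / 4 := by simp only [hK]; linarith [hD0 0]
      nlinarith [pow_nonneg (by norm_num : (0:ℝ) ≤ 1/2) n,
        pow_nonneg (by norm_num : (0:ℝ) ≤ 3/4) n]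
    have h5 := hgeom n
    have h3 : (0:ℝ) ≤ (3/4)^n := by positivity
    calc dist (A n) (A (n+1)) ≤ D n / 2 + c * (1/2)^n := hAstep n
      _ ≤ K * (3/4)^n / 2 + (K/4)*(3/4)^n := by linarith
      _ ≤ K * (3/4)^n := by nlinarith
  have hAcauchy : CauchySeq A := cauchySeq_of_le_geometric (3/4) K (by norm_num) hAgeom
  obtain ⟨w, hw⟩ := cauchySeq_tendsto_of_complete hAcauchy
  have hDto : Filter.Tendsto D Filter.atTop (nhds 0) := by
    apply squeeze_zero hD0 hgeom
    have h := tendsto_pow_atTop_nhds_zero_of_lt_one (by norm_num : (0:ℝ) ≤ 3/4) (by norm_num)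
    simpa using h.const_mul K
  have hBw : Filter.Tendsto B Filter.atTop (nhds w) := by
    rw [tendsto_iff_dist_tendsto_zero]
    apply squeeze_zero (fun n => dist_nonneg) (fun n => dist_triangle (B n) (A n) w)
    have h1 : Filter.Tendsto (fun n => dist (B n) (A n)) Filter.atTop (nhds 0) := by
      simpa [dist_comm] using hDto
    have h2 : Filter.Tendsto (fun n => dist (A n) w) Filter.atTop (nhds 0) :=
      tendsto_iff_dist_tendsto_zero.mp hw
    simpa using h1.add h2
  have hwfr : w ∈ frontier Y := by
    rw [hYopen.frontier_eq]
    constructor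
    · exact mem_closure_of_tendsto hw (Filter.Eventually.of_forall fun n => (seq n).2.1)
    · exact hYopen.isClosed_compl.mem_of_tendsto hBw
        (Filter.Eventually.of_forall fun n => (seq n).2.2)
  have hbound : ∀ n, dist a (A n) + D n ≤ D 0 + 4 * c * (1 - (1/2)^n) := by
    intro n
    induction n with
    | zero => simp [hA, hseq]
    | succ n ih =>
      have h1 := hAstep n
      have h2 := hDstep n
      have h3 : dist a (A (n+1)) ≤ dist a (A n) + dist (A n) (A (n+1)) := dist_triangle _ _ _
      have h4 : (1/2:ℝ)^(n+1) = (1/2)^n / 2 := by ring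
      rw [h4]
      linarith
  refine ⟨w, hwfr, ?_⟩
  have hle : ∀ n, dist a (A n) ≤ dist a b + ε / 2 := by
    intro n
    have h1 := hbound n
    have hD0eq : D 0 = dist a b := by simp [hD, hA, hB, hseq]
    have hp : (0:ℝ) ≤ (1/2)^n := by positivity
    have hp2 : (1/2:ℝ)^n ≤ 1 := pow_le_one₀ (by norm_num) (by norm_num)
    have h2 := hD0 n
    simp only [hc] at *
    nlinarith
  have ht : Filter.Tendsto (fun n => dist a (A n)) Filter.atTop (nhds (dist a w)) :=
    Filter.Tendsto.dist tendsto_const_nhds hw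
  have := le_of_tendsto ht (Filter.Eventually.of_forall hle)
  linarith

end auxx

/-- for `p ≥ 1` and a probability measure `μ` on `Y` with finite `p`-th moment,
`W'_p(μ,0)^p = inf { W_p(μ,ξ)^p : ξ ∈ P(∂Y) }` and
`2^{-1+1/p} W'_p(μ,0) ≤ W*_p(μ) ≤ W'_p(μ,0)`. -/
theorem Wstar_vs_WprimeZero {X : Type*} [MetricSpace X] [CompleteSpace X]
    [TopologicalSpace.SeparableSpace X] [MeasurableSpace X] [BorelSpace X]
    (hlength : IsLengthDist (fun x y : X => dist x y))
    (Y : Set X) (hYopen : IsOpen Y) (hYne : Y.Nonempty) (hYproper : Y ≠ Set.univ)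
    (p : ℝ) (hp : 1 ≤ p) (μ : Measure X) (hprob : IsProbabilityMeasure μ)
    (hsupp : μ Yᶜ = 0)
    (hmoment : ∃ x₀ : X, (∫⁻ x, ENNReal.ofReal (dist x x₀ ^ p) ∂μ) < ∞) :
    WprimeZeroPow Y p μ =
      (⨅ ξ : {ξ : Measure X // IsProbabilityMeasure ξ ∧ ξ (frontier Y)ᶜ = 0},
        WpPow p μ ξ.1) ∧
    ENNReal.ofReal (2 ^ (-1 + 1/p : ℝ)) * (WprimeZeroPow Y p μ) ^ (1/p) ≤ Wstar Y p μ ∧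
    Wstar Y p μ ≤ (WprimeZeroPow Y p μ) ^ (1/p) := by
  classical
  haveI := hprob
  haveI : SecondCountableTopology X := UniformSpace.secondCountable_of_separable X
  have hYc : Yᶜ.Nonempty := by rwa [nonempty_compl]
  haveI : Nonempty (Yᶜ : Set X) := hYc.to_subtype
  have hp0 : 0 < p := lt_of_lt_of_le one_pos hp
  have hp0' : 0 ≤ p := hp0.le
  have hdmeas : Measurable (fun z : X × X => ENNReal.ofReal (dist z.1 z.2 ^ p)) :=
    (ENNReal.continuous_ofReal.comp
      (continuous_dist.rpow_const fun _ => Or.inr hp0')).measurable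
  have hdstarmeas : Measurable (fun z : X × X => ENNReal.ofReal (dstar Y z.1 z.2 ^ p)) :=
    (ENNReal.continuous_ofReal.comp
      ((continuous_dstar hYc).rpow_const fun _ => Or.inr hp0')).measurable
  have hinfmeas : Measurable (fun x : X => ENNReal.ofReal (infDist x Yᶜ ^ p)) :=
    (ENNReal.continuous_ofReal.comp
      ((continuous_infDist_pt _).rpow_const fun _ => Or.inr hp0')).measurable
  have hfrsub : frontier Y ⊆ Yᶜ := by
    rw [hYopen.frontier_eq]; exact fun x hx => hx.2
  -- PART 3
  have hofReal2p : ENNReal.ofReal ((2:ℝ)^p) = (2:ℝ≥0∞)^p := by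
    rw [← ENNReal.ofReal_rpow_of_pos (by norm_num), ENNReal.ofReal_ofNat]
  have hmdiag : Measurable (fun x : X => (x, x)) := measurable_id.prodMk measurable_id
  have hdiagmem : μ.map (fun x => (x,x)) ∈ Cpl μ μ := by
    constructor
    · rw [Measure.map_map measurable_fst hmdiag]
      simp [Function.comp_def]
    · rw [Measure.map_map measurable_snd hmdiag]
      simp [Function.comp_def]
  have h3 : WstarPow Y p μ μ ≤ (2:ℝ≥0∞)^p * WprimeZeroPow Y p μ := by
    refine le_trans (iInf_le _ ⟨_, hdiagmem⟩) ?_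
    rw [← hofReal2p]
    have hdiagcost : tcost (dstar Y) p (μ.map fun x => (x,x)) =
        ∫⁻ x, ENNReal.ofReal (dstar Y x x ^ p) ∂μ := by
      rw [tcost, lintegral_map hdstarmeas hmdiag]
    rw [hdiagcost, WprimeZeroPow, ← lintegral_const_mul' _ _ ENNReal.ofReal_ne_top]
    apply lintegral_mono
    intro x
    have h1 : dstar Y x x ≤ 2 * infDist x Yᶜ := dstar_self_le hYc x
    have h2 : dstar Y x x ^ p ≤ (2 * infDist x Yᶜ)^p :=
      Real.rpow_le_rpow (dstar_nonneg x x) h1 hp0'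
    have h4 : ((2:ℝ) * infDist x Yᶜ)^p = 2^p * infDist x Yᶜ ^ p :=
      Real.mul_rpow (by norm_num) infDist_nonneg
    calc ENNReal.ofReal (dstar Y x x ^ p)
        ≤ ENNReal.ofReal ((2:ℝ)^p * infDist x Yᶜ^p) := ENNReal.ofReal_le_ofReal (by linarith)
      _ = ENNReal.ofReal ((2:ℝ)^p) * ENNReal.ofReal (infDist x Yᶜ^p) :=
          ENNReal.ofReal_mul (by positivity)
  have part3 : Wstar Y p μ ≤ (WprimeZeroPow Y p μ) ^ (1/p) := by
    rw [Wstar]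
    calc 2⁻¹ * (WstarPow Y p μ μ)^(1/p)
        ≤ 2⁻¹ * ((2:ℝ≥0∞)^p * WprimeZeroPow Y p μ)^(1/p) :=
          mul_le_mul_right (ENNReal.rpow_le_rpow h3 (by positivity)) _
      _ = 2⁻¹ * (((2:ℝ≥0∞)^p)^(1/p) * (WprimeZeroPow Y p μ)^(1/p)) := by
          rw [ENNReal.mul_rpow_of_nonneg _ _ (by positivity)]
      _ = (WprimeZeroPow Y p μ)^(1/p) := by
          rw [← ENNReal.rpow_mul, mul_one_div_cancel hp0.ne', ENNReal.rpow_one, ← mul_assoc,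
            ENNReal.inv_mul_cancel two_ne_zero ENNReal.ofNat_ne_top, one_mul]
  -- PART 2
  have key2 : 2 * WprimeZeroPow Y p μ ≤ WstarPow Y p μ μ := by
    rw [WstarPow]
    refine le_iInf ?_
    rintro ⟨q, hq1, hq2⟩
    have hpt : ∀ z : X × X,
        ENNReal.ofReal (infDist z.1 Yᶜ ^ p) + ENNReal.ofReal (infDist z.2 Yᶜ ^ p)
          ≤ ENNReal.ofReal (dstar Y z.1 z.2 ^ p) := by
      intro z
      rw [← ENNReal.ofReal_rpow_of_nonneg infDist_nonneg hp0',
          ← ENNReal.ofReal_rpow_of_nonneg infDist_nonneg hp0',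
          ← ENNReal.ofReal_rpow_of_nonneg (dstar_nonneg _ _) hp0']
      calc ENNReal.ofReal (infDist z.1 Yᶜ) ^ p + ENNReal.ofReal (infDist z.2 Yᶜ) ^ p
          ≤ (ENNReal.ofReal (infDist z.1 Yᶜ) + ENNReal.ofReal (infDist z.2 Yᶜ)) ^ p :=
            ENNReal.add_rpow_le_rpow_add _ _ hp
        _ = ENNReal.ofReal (infDist z.1 Yᶜ + infDist z.2 Yᶜ) ^ p := by
            rw [← ENNReal.ofReal_add infDist_nonneg infDist_nonneg]
        _ ≤ ENNReal.ofReal (dstar Y z.1 z.2) ^ p :=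
            ENNReal.rpow_le_rpow
              (ENNReal.ofReal_le_ofReal (add_infDist_le_dstar hYc _ _)) hp0'
    have hmarg1 : ∫⁻ z : X × X, ENNReal.ofReal (infDist z.1 Yᶜ ^ p) ∂q
        = WprimeZeroPow Y p μ := by
      rw [WprimeZeroPow, ← hq1, lintegral_map hinfmeas measurable_fst]
    have hmarg2 : ∫⁻ z : X × X, ENNReal.ofReal (infDist z.2 Yᶜ ^ p) ∂q
        = WprimeZeroPow Y p μ := by
      rw [WprimeZeroPow, ← hq2, lintegral_map hinfmeas measurable_snd]
    calc 2 * WprimeZeroPow Y p μ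
        = (∫⁻ z : X × X, ENNReal.ofReal (infDist z.1 Yᶜ ^ p) ∂q)
          + ∫⁻ z : X × X, ENNReal.ofReal (infDist z.2 Yᶜ ^ p) ∂q := by
          rw [hmarg1, hmarg2, two_mul]
      _ = ∫⁻ z : X × X, (ENNReal.ofReal (infDist z.1 Yᶜ ^ p)
            + ENNReal.ofReal (infDist z.2 Yᶜ ^ p)) ∂q :=
          (lintegral_add_left (hinfmeas.comp measurable_fst) _).symm
      _ ≤ tcost (dstar Y) p q := lintegral_mono hpt
  have part2 : ENNReal.ofReal (2 ^ (-1 + 1/p : ℝ)) * (WprimeZeroPow Y p μ) ^ (1/p)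
      ≤ Wstar Y p μ := by
    rw [Wstar]
    have h2 : ENNReal.ofReal ((2:ℝ) ^ (-1 + 1/p : ℝ)) = 2⁻¹ * (2:ℝ≥0∞) ^ (1/p : ℝ) := by
      rw [← ENNReal.ofReal_rpow_of_pos (by norm_num), ENNReal.ofReal_ofNat,
        ENNReal.rpow_add _ _ two_ne_zero ENNReal.ofNat_ne_top, ENNReal.rpow_neg_one]
    rw [h2, mul_assoc]
    refine mul_le_mul_right ?_ _
    calc (2:ℝ≥0∞)^(1/p:ℝ) * (WprimeZeroPow Y p μ)^(1/p)
        = (2 * WprimeZeroPow Y p μ)^(1/p) := by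
          rw [ENNReal.mul_rpow_of_nonneg _ _ (by positivity)]
      _ ≤ (WstarPow Y p μ μ)^(1/p) := ENNReal.rpow_le_rpow key2 (by positivity)
  -- PART 1, direction ≤
  have dirA : WprimeZeroPow Y p μ ≤
      ⨅ ξ : {ξ : Measure X // IsProbabilityMeasure ξ ∧ ξ (frontier Y)ᶜ = 0},
        WpPow p μ ξ.1 := by
    refine le_iInf ?_
    rintro ⟨ξ, hξprob, hξF⟩
    rw [WpPow]
    refine le_iInf ?_
    rintro ⟨q, hq1, hq2⟩
    have hmarg : WprimeZeroPow Y p μ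
        = ∫⁻ z : X × X, ENNReal.ofReal (infDist z.1 Yᶜ ^ p) ∂q := by
      rw [WprimeZeroPow, ← hq1, lintegral_map hinfmeas measurable_fst]
    rw [hmarg]
    have hae : ∀ᵐ z : X × X ∂q, z.2 ∈ frontier Y := by
      rw [ae_iff]
      have he : {z : X × X | ¬ z.2 ∈ frontier Y} = Prod.snd ⁻¹' (frontier Y)ᶜ := rfl
      rw [he, ← Measure.map_apply measurable_snd isClosed_frontier.measurableSet.compl,
        hq2, hξF]
    refine lintegral_mono_ae (hae.mono ?_)
    intro z hz
    have h1 : infDist z.1 Yᶜ ≤ dist z.1 z.2 := infDist_le_dist_of_mem (hfrsub hz)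
    exact ENNReal.ofReal_le_ofReal (Real.rpow_le_rpow infDist_nonneg h1 hp0')
  -- PART 1, direction ≥
  have hFne : (frontier Y).Nonempty := by
    obtain ⟨a, ha⟩ := hYne
    obtain ⟨b, hb⟩ := hYc
    obtain ⟨w, hw, -⟩ := exists_frontier_close hlength hYopen ha hb one_pos
    exact ⟨w, hw⟩
  haveI : Nonempty (frontier Y : Set X) := hFne.to_subtype
  have hfrinf : ∀ x ∈ Y, infDist x (frontier Y) ≤ infDist x Yᶜ := by
    intro x hx
    apply le_of_forall_pos_le_add
    intro ε hε
    obtain ⟨b, hb, hdb⟩ := (infDist_lt_iff hYc).mp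
      (show infDist x Yᶜ < infDist x Yᶜ + ε/2 by linarith)
    obtain ⟨w, hw, hdw⟩ := exists_frontier_close hlength hYopen hx hb (half_pos hε)
    have := infDist_le_dist_of_mem (x := x) hw
    linarith
  have key : ∀ ε : ℝ, 0 < ε →
      (⨅ ξ : {ξ : Measure X // IsProbabilityMeasure ξ ∧ ξ (frontier Y)ᶜ = 0},
        WpPow p μ ξ.1) ≤ ∫⁻ x, ENNReal.ofReal ((infDist x Yᶜ + ε)^p) ∂μ := by
    intro ε hε
    set u : ℕ → X := fun n => (TopologicalSpace.denseSeq (frontier Y : Set X) n : X) with hu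
    have humem : ∀ n, u n ∈ frontier Y := fun n =>
      Subtype.coe_prop (TopologicalSpace.denseSeq (frontier Y : Set X) n)
    have hudense := TopologicalSpace.denseRange_denseSeq (frontier Y : Set X)
    have hex : ∀ x : X, ∃ n, dist x (u n) < infDist x (frontier Y) + ε := by
      intro x
      obtain ⟨y, hy, hdy⟩ := (infDist_lt_iff hFne).mp
        (show infDist x (frontier Y) < infDist x (frontier Y) + ε/2 by linarith)
      obtain ⟨n, hn⟩ := Metric.denseRange_iff.mp hudense ⟨y, hy⟩ (ε/2) (half_pos hε)
      refine ⟨n, ?_⟩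
      rw [Subtype.dist_eq] at hn
      calc dist x (u n) ≤ dist x y + dist y (u n) := dist_triangle _ _ _
        _ < infDist x (frontier Y) + ε := by
            simp only [hu]
            push_cast at hn ⊢
            linarith
    set T : X → X := fun x => u (Nat.find (hex x)) with hT
    have hTmeas : Measurable T := by
      apply Measurable.find (f := fun n (_ : X) => u n)
        (p := fun n x => dist x (u n) < infDist x (frontier Y) + ε)
        (fun n => measurable_const)
      intro n
      exact (isOpen_lt (continuous_id.dist continuous_const)
        ((continuous_infDist_pt _).add continuous_const)).measurableSet
    have hTmem : ∀ x, T x ∈ frontier Y := fun x => humem _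
    have hTdist : ∀ x, dist x (T x) < infDist x (frontier Y) + ε := fun x => Nat.find_spec (hex x)
    set ξ : Measure X := μ.map T with hξ
    haveI hξprob : IsProbabilityMeasure ξ := Measure.isProbabilityMeasure_map hTmeas.aemeasurable
    have hξF : ξ (frontier Y)ᶜ = 0 := by
      rw [hξ, Measure.map_apply hTmeas isClosed_frontier.measurableSet.compl]
      have : T ⁻¹' (frontier Y)ᶜ = ∅ := by
        apply eq_empty_iff_forall_notMem.mpr
        intro x hx
        exact hx (hTmem x)
      rw [this, measure_empty]
    refine le_trans (iInf_le _ ⟨ξ, hξprob, hξF⟩) ?_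
    rw [WpPow]
    have hmT : Measurable (fun x : X => (x, T x)) := measurable_id.prodMk hTmeas
    have hqmem : μ.map (fun x => (x, T x)) ∈ Cpl μ ξ := by
      constructor
      · rw [Measure.map_map measurable_fst hmT]
        simp [Function.comp_def]
      · rw [Measure.map_map measurable_snd hmT]
        rfl
    refine le_trans (iInf_le _ ⟨_, hqmem⟩) ?_
    show (∫⁻ z : X × X, ENNReal.ofReal (dist z.1 z.2 ^ p) ∂(μ.map fun x => (x, T x))) ≤ _
    rw [lintegral_map hdmeas hmT]
    have haeY : ∀ᵐ x ∂μ, x ∈ Y := by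
      rw [ae_iff]
      have : {x : X | ¬ x ∈ Y} = Yᶜ := rfl
      rw [this, hsupp]
    refine lintegral_mono_ae (haeY.mono ?_)
    intro x hx
    have h1 : dist x (T x) ≤ infDist x Yᶜ + ε := by
      have := hTdist x
      have := hfrinf x hx
      linarith
    exact ENNReal.ofReal_le_ofReal (Real.rpow_le_rpow dist_nonneg h1 hp0')
  have dirB : (⨅ ξ : {ξ : Measure X // IsProbabilityMeasure ξ ∧ ξ (frontier Y)ᶜ = 0},
      WpPow p μ ξ.1) ≤ WprimeZeroPow Y p μ := by
    set f : ℕ → X → ℝ≥0∞ :=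
      fun n x => ENNReal.ofReal ((infDist x Yᶜ + 1/(n+1))^p) with hf
    have hfmeas : ∀ n, Measurable (f n) := fun n =>
      (ENNReal.continuous_ofReal.comp
        (((continuous_infDist_pt _).add continuous_const).rpow_const
          fun _ => Or.inr hp0')).measurable
    have hfanti : Antitone f := by
      intro n m hnm
      intro x
      apply ENNReal.ofReal_le_ofReal
      apply Real.rpow_le_rpow (add_nonneg infDist_nonneg (by positivity)) _ hp0'
      have h1 : (1:ℝ)/(m+1) ≤ 1/(n+1) := by
        apply one_div_le_one_div_of_le (by positivity)
        exact_mod_cast by exact_mod_cast Nat.succ_le_succ hnm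
      have := infDist_nonneg (x := x) (s := Yᶜ)
      linarith
    have hf0 : ∫⁻ x, f 0 x ∂μ ≠ ⊤ := by
      obtain ⟨x₀, hx₀⟩ := hmoment
      obtain ⟨b, hb⟩ := hYc
      set C : ℝ := dist x₀ b + 1 with hC
      have hC1 : (1:ℝ) ≤ C := by
        have := dist_nonneg (x := x₀) (y := b)
        simp only [hC]; linarith
      have hptb : ∀ x : X, f 0 x ≤
          ENNReal.ofReal ((2:ℝ)^p) * (ENNReal.ofReal (dist x x₀ ^ p) + ENNReal.ofReal (C^p)) := by
        intro x
        have h1 : infDist x Yᶜ + 1/((0:ℕ)+1) ≤ dist x x₀ + C := by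
          have e1 : infDist x Yᶜ ≤ dist x b := infDist_le_dist_of_mem hb
          have e2 : dist x b ≤ dist x x₀ + dist x₀ b := dist_triangle _ _ _
          norm_num
          simp only [hC]
          linarith
        have h2 : ((infDist x Yᶜ + 1/((0:ℕ)+1):ℝ))^p ≤ (dist x x₀ + C)^p :=
          Real.rpow_le_rpow (add_nonneg infDist_nonneg (by positivity)) h1 hp0'
        have h3 : (dist x x₀ + C)^p ≤ 2^p * (dist x x₀ ^ p + C^p) := by
          have hd0 : (0:ℝ) ≤ dist x x₀ := dist_nonneg
          have hC0 : (0:ℝ) ≤ C := by linarith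
          have hA := Real.rpow_nonneg hd0 p
          have hB := Real.rpow_nonneg hC0 p
          have h2p : (0:ℝ) ≤ 2^p := Real.rpow_nonneg (by norm_num) p
          rcases le_total (dist x x₀) C with h | h
          · calc (dist x x₀ + C)^p ≤ (2*C)^p :=
                Real.rpow_le_rpow (by positivity) (by linarith) hp0'
              _ = 2^p * C^p := Real.mul_rpow (by norm_num) hC0
              _ ≤ 2^p * (dist x x₀^p + C^p) := by nlinarith
          · calc (dist x x₀ + C)^p ≤ (2*dist x x₀)^p :=
                Real.rpow_le_rpow (by positivity) (by linarith) hp0'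
              _ = 2^p * dist x x₀^p := Real.mul_rpow (by norm_num) hd0
              _ ≤ 2^p * (dist x x₀^p + C^p) := by nlinarith
        calc f 0 x ≤ ENNReal.ofReal ((2:ℝ)^p * (dist x x₀^p + C^p)) := by
              apply ENNReal.ofReal_le_ofReal
              push_cast at h2 ⊢
              linarith
          _ = ENNReal.ofReal ((2:ℝ)^p) * (ENNReal.ofReal (dist x x₀^p) + ENNReal.ofReal (C^p)) := by
              rw [ENNReal.ofReal_mul (Real.rpow_nonneg (by norm_num) p),
                ENNReal.ofReal_add (Real.rpow_nonneg dist_nonneg p)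
                  (Real.rpow_nonneg (by linarith) p)]
      have hb1 : ∫⁻ x, f 0 x ∂μ ≤
          ENNReal.ofReal ((2:ℝ)^p) *
            ((∫⁻ x, ENNReal.ofReal (dist x x₀^p) ∂μ) + ENNReal.ofReal (C^p)) := by
        calc ∫⁻ x, f 0 x ∂μ
            ≤ ∫⁻ x, ENNReal.ofReal ((2:ℝ)^p) *
                (ENNReal.ofReal (dist x x₀ ^ p) + ENNReal.ofReal (C^p)) ∂μ :=
              lintegral_mono hptb
          _ = ENNReal.ofReal ((2:ℝ)^p) *
              ∫⁻ x, (ENNReal.ofReal (dist x x₀ ^ p) + ENNReal.ofReal (C^p)) ∂μ :=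
              lintegral_const_mul' _ _ ENNReal.ofReal_ne_top
          _ = ENNReal.ofReal ((2:ℝ)^p) *
              ((∫⁻ x, ENNReal.ofReal (dist x x₀^p) ∂μ) + ENNReal.ofReal (C^p) * μ univ) := by
              rw [lintegral_add_right _ measurable_const, lintegral_const]
          _ = _ := by rw [measure_univ, mul_one]
      exact ne_of_lt (lt_of_le_of_lt hb1 (ENNReal.mul_lt_top ENNReal.ofReal_lt_top
        (ENNReal.add_lt_top.mpr ⟨hx₀, ENNReal.ofReal_lt_top⟩)))
    have hptinf : ∀ x, ⨅ n, f n x = ENNReal.ofReal (infDist x Yᶜ ^ p) := by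
      intro x
      have h1 : Filter.Tendsto (fun n : ℕ => f n x) Filter.atTop (nhds (⨅ n, f n x)) :=
        tendsto_atTop_iInf (fun n m h => hfanti h x)
      have h2 : Filter.Tendsto (fun n : ℕ => f n x) Filter.atTop
          (nhds (ENNReal.ofReal (infDist x Yᶜ ^ p))) := by
        have t1 : Filter.Tendsto (fun n : ℕ => infDist x Yᶜ + 1/((n:ℝ)+1)) Filter.atTop
            (nhds (infDist x Yᶜ)) := by
          have := tendsto_one_div_add_atTop_nhds_zero_nat (𝕜 := ℝ)
          simpa using tendsto_const_nhds.add this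
        have t2 : Filter.Tendsto (fun t : ℝ => ENNReal.ofReal (t ^ p)) (nhds (infDist x Yᶜ))
            (nhds (ENNReal.ofReal (infDist x Yᶜ ^ p))) :=
          (ENNReal.continuous_ofReal.comp (Real.continuous_rpow_const hp0')).tendsto _
        exact t2.comp t1
      exact tendsto_nhds_unique h1 h2
    calc (⨅ ξ : {ξ : Measure X // IsProbabilityMeasure ξ ∧ ξ (frontier Y)ᶜ = 0},
          WpPow p μ ξ.1)
        ≤ ⨅ n : ℕ, ∫⁻ x, f n x ∂μ := le_iInf fun n => key _ (by positivity)
      _ = ∫⁻ x, ⨅ n, f n x ∂μ := (lintegral_iInf hfmeas hfanti hf0).symm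
      _ = WprimeZeroPow Y p μ := by
          rw [WprimeZeroPow]
          exact lintegral_congr fun x => hptinf x
  exact ⟨le_antisymm dirA dirB, part2, part3⟩
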